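/- arXiv:2106.03349 — 3 statements merged into one kernel-verified Lean document; each statement's English description precedes it below -/
import Mathlib

section
/- Let k ≥ 1 and D ≥ 0, let T̃ be the complete k-ary tree of depth D with root λ, with parameters g_u ∈ [0,1] on the nodes and g_u = 0 for every node at depth D. Fix any node s of T̃. Then the sum, over all full subtrees T of T̃ that have s as a leaf node, of the weight ∏_{u ∈ L^T} (1 − g_u) · ∏_{u' ∈ I^T} g_{u'} equals (1 − g_s) · ∏_{s' ∈ A_s} g_{s'}, where A_s is the set of (proper) ancestor nodes of s in T̃ (A_λ is the empty set). -/
inductive FullTree (k : ℕ) : ℕ → Type where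
  | leaf {D : ℕ} : FullTree k D
  | node {D : ℕ} (c : Fin k → FullTree k D) : FullTree k (D + 1)

namespace FullTree

def equivZero (k : ℕ) : FullTree k 0 ≃ Unit where
  toFun _ := ()
  invFun _ := .leaf
  left_inv t := by cases t; rfl
  right_inv _ := rfl

def equivSucc (k D : ℕ) : FullTree k (D + 1) ≃ Option (Fin k → FullTree k D) where
  toFun t := match t with
    | .leaf => none
    | .node c => some c
  invFun o := match o with
    | none => .leaf
    | some c => .node c
  left_inv t := by cases t <;> rfl
  right_inv o := by cases o <;> rfl

instance instFintype (k : ℕ) : (D : ℕ) → Fintype (FullTree k D)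
  | 0 => Fintype.ofEquiv Unit (equivZero k).symm
  | (D + 1) => letI := instFintype k D; Fintype.ofEquiv _ (equivSucc k D).symm

noncomputable instance (k D : ℕ) : DecidableEq (FullTree k D) := Classical.decEq _

/-- The set of (paths to) leaf nodes of a full subtree whose root has path `u`. -/
def leaves {k : ℕ} : {D : ℕ} → List (Fin k) → FullTree k D → Finset (List (Fin k))
  | _, u, .leaf => {u}
  | _, u, .node c => Finset.univ.biUnion fun i => leaves (u ++ [i]) (c i)

/-- The set of (paths to) inner nodes of a full subtree whose root has path `u`. -/
def inners {k : ℕ} : {D : ℕ} → List (Fin k) → FullTree k D → Finset (List (Fin k))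
  | _, _, .leaf => ∅
  | _, u, .node c => insert u (Finset.univ.biUnion fun i => inners (u ++ [i]) (c i))

/-- The weight ∏_{u ∈ L^T} (1 - g u) * ∏_{u ∈ I^T} g u of a full subtree rooted at path `u`. -/
noncomputable def weight {k D : ℕ} (g : List (Fin k) → ℝ) (u : List (Fin k))
    (T : FullTree k D) : ℝ :=
  (∏ s ∈ leaves u T, (1 - g s)) * ∏ s ∈ inners u T, g s

end FullTree


namespace FullTree

variable {k : ℕ}

theorem prefix_of_mem_leaves : ∀ {d : ℕ} (u v : List (Fin k)) (T : FullTree k d),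
    v ∈ leaves u T → u <+: v
  | _, u, v, .leaf, h => by
      simp only [leaves, Finset.mem_singleton] at h
      exact h ▸ List.prefix_refl u
  | _, u, v, .node c, h => by
      simp only [leaves, Finset.mem_biUnion, Finset.mem_univ, true_and] at h
      obtain ⟨i, hi⟩ := h
      exact (List.prefix_append u [i]).trans (prefix_of_mem_leaves _ _ _ hi)

theorem prefix_of_mem_inners : ∀ {d : ℕ} (u v : List (Fin k)) (T : FullTree k d),
    v ∈ inners u T → u <+: v
  | _, u, v, .leaf, h => by simp [inners] at h
  | _, u, v, .node c, h => by
      simp only [inners, Finset.mem_insert, Finset.mem_biUnion, Finset.mem_univ, true_and] at h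
      rcases h with rfl | ⟨i, hi⟩
      · exact List.prefix_rfl
      · exact (List.prefix_append u [i]).trans (prefix_of_mem_inners _ _ _ hi)

theorem eq_of_prefix_prefix {u v : List (Fin k)} {i j : Fin k}
    (h1 : u ++ [i] <+: v) (h2 : u ++ [j] <+: v) : i = j := by
  have h : u ++ [i] = u ++ [j] := by
    rcases List.prefix_or_prefix_of_prefix h1 h2 with h3 | h3
    · exact h3.eq_of_length (by simp)
    · exact (h3.eq_of_length (by simp)).symm
  simpa using h

theorem children_leaves_disjoint {d : ℕ} (u : List (Fin k)) (c : Fin k → FullTree k d) :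
    Set.PairwiseDisjoint (Finset.univ : Finset (Fin k))
      (fun i => leaves (u ++ [i]) (c i)) := by
  intro i _ j _ hij
  refine Finset.disjoint_left.2 fun v hvi hvj => hij ?_
  exact eq_of_prefix_prefix (prefix_of_mem_leaves _ _ _ hvi) (prefix_of_mem_leaves _ _ _ hvj)

theorem children_inners_disjoint {d : ℕ} (u : List (Fin k)) (c : Fin k → FullTree k d) :
    Set.PairwiseDisjoint (Finset.univ : Finset (Fin k))
      (fun i => inners (u ++ [i]) (c i)) := by
  intro i _ j _ hij
  refine Finset.disjoint_left.2 fun v hvi hvj => hij ?_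
  exact eq_of_prefix_prefix (prefix_of_mem_inners _ _ _ hvi) (prefix_of_mem_inners _ _ _ hvj)

theorem not_mem_inners_biUnion {d : ℕ} (u : List (Fin k)) (c : Fin k → FullTree k d) :
    u ∉ Finset.univ.biUnion fun i => inners (u ++ [i]) (c i) := by
  intro h
  simp only [Finset.mem_biUnion, Finset.mem_univ, true_and] at h
  obtain ⟨i, hi⟩ := h
  have := (prefix_of_mem_inners _ _ _ hi).length_le
  simp at this

theorem weight_leaf {d : ℕ} (g : List (Fin k) → ℝ) (u : List (Fin k)) :
    weight g u (.leaf : FullTree k d) = 1 - g u := by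
  unfold weight
  rw [show leaves u (.leaf : FullTree k d) = {u} from rfl,
      show inners u (.leaf : FullTree k d) = ∅ from rfl]
  simp

theorem weight_node {d : ℕ} (g : List (Fin k) → ℝ) (u : List (Fin k))
    (c : Fin k → FullTree k d) :
    weight g u (.node c) = g u * ∏ i, weight g (u ++ [i]) (c i) := by
  unfold weight
  show (∏ s ∈ leaves u (.node c), (1 - g s)) * ∏ s ∈ inners u (.node c), g s = _
  rw [show leaves u (FullTree.node c) = Finset.univ.biUnion fun i => leaves (u ++ [i]) (c i)
        from rfl,
      show inners u (FullTree.node c)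
          = insert u (Finset.univ.biUnion fun i => inners (u ++ [i]) (c i)) from rfl,
      Finset.prod_biUnion (children_leaves_disjoint u c),
      Finset.prod_insert (not_mem_inners_biUnion u c),
      Finset.prod_biUnion (children_inners_disjoint u c), Finset.prod_mul_distrib]
  ring

theorem sum_over_succ {d : ℕ} (f : FullTree k (d + 1) → ℝ) :
    ∑ T : FullTree k (d + 1), f T
      = f .leaf + ∑ c : Fin k → FullTree k d, f (.node c) := by
  rw [← Equiv.sum_comp (equivSucc k d).symm f, Fintype.sum_option]
  rfl

theorem sum_weight : ∀ (d : ℕ) (g : List (Fin k) → ℝ) (u : List (Fin k)),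
    (∀ v : List (Fin k), u <+: v → v.length = u.length + d → g v = 0) →
    ∑ T : FullTree k d, weight g u T = 1
  | 0, g, u, h0 => by
      have hsum : ∑ T : FullTree k 0, weight g u T = weight g u (.leaf : FullTree k 0) := by
        rw [← Equiv.sum_comp (equivZero k).symm (weight g u), Fintype.sum_unique]
        rfl
      rw [hsum, weight_leaf, h0 u (List.prefix_refl u) (by simp)]
      ring
  | d + 1, g, u, h0 => by
      rw [sum_over_succ]
      have hnode : ∑ c : Fin k → FullTree k d, weight g u (.node c) = g u := by
        simp only [weight_node]
        rw [← Finset.mul_sum]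
        have : ∑ c : Fin k → FullTree k d, ∏ i, weight g (u ++ [i]) (c i)
            = ∏ i : Fin k, ∑ T : FullTree k d, weight g (u ++ [i]) T := by
          rw [Finset.prod_univ_sum, ← Fintype.piFinset_univ]
        rw [this]
        have hone : ∀ i : Fin k, ∑ T : FullTree k d, weight g (u ++ [i]) T = 1 := by
          intro i
          apply sum_weight d g (u ++ [i])
          intro v hv hlen
          exact h0 v ((List.prefix_append u [i]).trans hv) (by simp at hlen ⊢; omega)
        simp [hone]
      rw [weight_leaf, hnode]; ring

end FullTree


namespace FullTree

variable {k : ℕ}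

private theorem dropLast_map' {α β : Type*} (f : α → β) (l : List α) :
    (l.map f).dropLast = l.dropLast.map f := by
  induction l with
  | nil => rfl
  | cons a l ih =>
    cases l with
    | nil => rfl
    | cons b m => simpa using ih

private theorem inits_ne_nil' {α : Type*} (l : List α) : l.inits ≠ [] := by
  cases l <;> simp [List.inits_cons]

theorem mem_leaves_self_iff : ∀ {d : ℕ} (u : List (Fin k)) (T : FullTree k d),
    u ∈ leaves u T ↔ T = .leaf
  | _, u, .leaf => by
      constructor
      · intro _; rfl
      · intro _
        show u ∈ ({u} : Finset _)
        simp
  | _, u, .node c => by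
      constructor
      · intro h
        simp only [leaves, Finset.mem_biUnion, Finset.mem_univ, true_and] at h
        obtain ⟨i, hi⟩ := h
        have := (prefix_of_mem_leaves _ _ _ hi).length_le
        simp at this
      · intro h
        exact absurd h (by simp)

theorem sum_weight_filter : ∀ (d : ℕ) (s u : List (Fin k)) (g : List (Fin k) → ℝ),
    s.length ≤ d →
    (∀ v : List (Fin k), u <+: v → v.length = u.length + d → g v = 0) →
    ∑ T ∈ Finset.univ.filter (fun T : FullTree k d => (u ++ s) ∈ leaves u T), weight g u T
      = (1 - g (u ++ s)) * ((s.inits.dropLast.map (fun p => g (u ++ p))).prod)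
  | d, [], u, g, _, _ => by
      have hfilter : (Finset.univ.filter (fun T : FullTree k d => (u ++ []) ∈ leaves u T))
          = {(.leaf : FullTree k d)} := by
        ext T
        simp [mem_leaves_self_iff u T]
      rw [hfilter, Finset.sum_singleton, weight_leaf]
      simp [List.inits]
  | 0, i :: s', u, g, hs, h0 => by simp at hs
  | d + 1, i :: s', u, g, hs, h0 => by
      set s : List (Fin k) := i :: s' with hsdef
      rw [Finset.sum_filter,
        sum_over_succ (fun T => if (u ++ s) ∈ leaves u T then weight g u T else 0)]
      have hleafcond : ¬ ((u ++ s) ∈ leaves u (.leaf : FullTree k (d + 1))) := by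
        show ¬ (u ++ s) ∈ ({u} : Finset _)
        simp [hsdef]
      rw [if_neg hleafcond]
      have hcond : ∀ c : Fin k → FullTree k d,
          ((u ++ s) ∈ leaves u (.node c)) ↔ (u ++ s) ∈ leaves (u ++ [i]) (c i) := by
        intro c
        constructor
        · intro h
          simp only [leaves, Finset.mem_biUnion, Finset.mem_univ, true_and] at h
          obtain ⟨j, hj⟩ := h
          have hji : j = i :=
            eq_of_prefix_prefix (prefix_of_mem_leaves _ _ _ hj)
              ⟨s', by simp [hsdef]⟩
          exact hji ▸ hj
        · intro h
          simp only [leaves, Finset.mem_biUnion, Finset.mem_univ, true_and]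
          exact ⟨i, h⟩
      set F : Fin k → FullTree k d → ℝ := fun j T =>
        if j = i then (if (u ++ s) ∈ leaves (u ++ [i]) T then weight g (u ++ [i]) T else 0)
        else weight g (u ++ [j]) T with hF
      have hsummand : ∀ c : Fin k → FullTree k d,
          (if (u ++ s) ∈ leaves u (.node c) then weight g u (.node c) else 0)
            = g u * ∏ j, F j (c j) := by
        intro c
        by_cases hP : (u ++ s) ∈ leaves (u ++ [i]) (c i)
        · rw [if_pos ((hcond c).2 hP), weight_node]
          congr 1
          refine Finset.prod_congr rfl fun j _ => ?_
          by_cases hj : j = i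
          · subst hj; simp [hF, hP]
          · simp [hF, hj]
        · rw [if_neg (fun h => hP ((hcond c).1 h))]
          have hFi : F i (c i) = 0 := by simp [hF, hP]
          rw [Finset.prod_eq_zero (Finset.mem_univ i) hFi]
          ring
      rw [Finset.sum_congr rfl (fun c _ => hsummand c), ← Finset.mul_sum]
      have hswap : ∑ c : Fin k → FullTree k d, ∏ j, F j (c j)
          = ∏ j : Fin k, ∑ T : FullTree k d, F j T := by
        rw [Finset.prod_univ_sum, ← Fintype.piFinset_univ]
      rw [hswap]
      have hprod : ∏ j : Fin k, ∑ T : FullTree k d, F j T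
          = ∑ T : FullTree k d,
              if (u ++ s) ∈ leaves (u ++ [i]) T then weight g (u ++ [i]) T else 0 := by
        refine Finset.prod_eq_single i (fun j _ hj => ?_) (fun h => absurd (Finset.mem_univ i) h)
          |>.trans ?_
        · simp only [hF, if_neg hj]
          exact sum_weight d g (u ++ [j]) fun v hv hlen =>
            h0 v ((List.prefix_append u [j]).trans hv) (by simp at hlen ⊢; omega)
        · simp [hF]
      rw [hprod, ← Finset.sum_filter]
      have hre : u ++ s = (u ++ [i]) ++ s' := by rw [hsdef, List.append_cons]
      rw [hre, sum_weight_filter d s' (u ++ [i]) g (by simpa [hsdef] using hs)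
        (fun v hv hlen => h0 v ((List.prefix_append u [i]).trans hv)
          (by simp at hlen ⊢; omega))]
      have hinits : (s.inits.dropLast.map (fun p => g (u ++ p))).prod
          = g u * ((s'.inits.dropLast.map (fun p => g ((u ++ [i]) ++ p))).prod) := by
        rw [hsdef, List.inits_cons,
          List.dropLast_cons_of_ne_nil (by simp [inits_ne_nil' s']),
          dropLast_map']
        simp [List.map_map, Function.comp_def, ← List.append_cons]
      rw [hinits]
      ring

end FullTree

/-- Nodes of the complete `k`-ary tree of depth `D` are encoded by their paths
from the root `λ = []`, so `A_s` (the proper ancestors of `s`) is the list `s.inits.dropLast`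
of proper prefixes of `s`.  The sum of the weights of all full subtrees having `s` as a leaf
equals `(1 - g s) * ∏_{s' ∈ A_s} g s'`. -/
theorem stmt2 (k D : ℕ) (hk : 1 ≤ k) (g : List (Fin k) → ℝ)
    (hg : ∀ u : List (Fin k), u.length ≤ D → g u ∈ Set.Icc (0 : ℝ) 1)
    (hgD : ∀ u : List (Fin k), u.length = D → g u = 0)
    (s : List (Fin k)) (hs : s.length ≤ D) :
    ∑ T ∈ Finset.univ.filter (fun T : FullTree k D => s ∈ FullTree.leaves [] T),
        FullTree.weight g [] T
      = (1 - g s) * (s.inits.dropLast.map g).prod := by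
  have h := FullTree.sum_weight_filter D s [] g hs
    (fun v _ hlen => hgD v (by simpa using hlen))
  simpa using h
end

section
/- In the setting of the quadtree mixture algorithm, fix k ≥ 0 and let r be any block on the path S_k of blocks containing pixel k. Then the one-step update satisfies the identity (1 − g_{r|k}) · ∏_{s ∈ A_r} g_{s|k} = (q̃(v_k | v^{k−1}, r) / q(v_k | v^{k−1}, s_λ)) · (1 − g_{r|k−1}) · ∏_{s ∈ A_r} g_{s|k−1}, where A_r is the set of proper ancestors of r; this holds both when |r| = 1 and when |r| > 1. -/
namespace FullTree

/-- Follow the path `p` down the full subtree `T` (whose root has path `u`) until a leaf of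
`T` is reached; returns the path of that leaf.  For a pixel `p` (a path of full length
`dmax`), `leafOf [] m p` is the unique leaf block `s_m` of `m` containing the pixel `p`. -/
def leafOf {k : ℕ} : {D : ℕ} → List (Fin k) → FullTree k D → List (Fin k) → List (Fin k)
  | _, u, .leaf, _ => u
  | _, u, .node _, [] => u
  | _, u, .node c, i :: p => leafOf (u ++ [i]) (c i) p

end FullTree

/-- The likelihood `p(v^{t-1} | m) = ∏_{i < t} q̃(v_i | v^{i-1}, s_m(i))` of the first `t`
pixel values under model `m`, where `qt i s x = q̃(x | v^{i-1}, s)` is the per-block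
predictive pmf and `s_m(i)` the unique leaf of `m` containing pixel `i`. -/
noncomputable def like (dmax : ℕ) {V : Type} (qt : ℕ → List (Fin 4) → V → ℝ)
    (v : ℕ → V) (pix : ℕ → List (Fin 4)) (m : FullTree 4 dmax) (t : ℕ) : ℝ :=
  ∏ i ∈ Finset.range t, qt i (FullTree.leafOf [] m (pix i)) (v i)

/-- `Qd dmax qt v pix G t j` is the recursively mixed coding probability
`q(v_t | v^{t-1}, s)` at the block `s = (pix t).take (dmax - j)` on the path `S_t` of blocks
containing pixel `t` (`j` is the distance from `s` down to the singleton block of `S_t`),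
computed with the current weights `G = g_{·|t-1}`:
`q = q̃` at singleton blocks and `q = (1 - g_{s|t-1}) q̃ + g_{s|t-1} q(child)` otherwise. -/
noncomputable def Qd (dmax : ℕ) {V : Type} (qt : ℕ → List (Fin 4) → V → ℝ)
    (v : ℕ → V) (pix : ℕ → List (Fin 4)) (G : List (Fin 4) → ℝ) (t : ℕ) : ℕ → ℝ
  | 0 => qt t ((pix t).take dmax) (v t)
  | j + 1 =>
    (1 - G ((pix t).take (dmax - (j + 1)))) * qt t ((pix t).take (dmax - (j + 1))) (v t)
      + G ((pix t).take (dmax - (j + 1))) * Qd dmax qt v pix G t j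

/-- One step of the weight update: `g_{s|t} = g_{s|t-1}` if `s ∉ S_t` or `|s| = 1`
(`s ∈ S_t` iff `s` is a prefix of the pixel path `pix t`; `|s| = 1` iff `s.length = dmax`),
and `g_{s|t} = g_{s|t-1} · q(v_t | v^{t-1}, s_child) / q(v_t | v^{t-1}, s)` otherwise. -/
noncomputable def Gnext (dmax : ℕ) {V : Type} (qt : ℕ → List (Fin 4) → V → ℝ)
    (v : ℕ → V) (pix : ℕ → List (Fin 4)) (G : List (Fin 4) → ℝ) (t : ℕ)
    (s : List (Fin 4)) : ℝ :=
  if s <+: pix t ∧ s.length < dmax then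
    G s * Qd dmax qt v pix G t (dmax - s.length - 1) / Qd dmax qt v pix G t (dmax - s.length)
  else G s

/-- `GT dmax qt v pix g t s = g_{s|t-1}`: the sequentially updated weights, with
`GT ... 0 s = g_{s|-1} = g s`. -/
noncomputable def GT (dmax : ℕ) {V : Type} (qt : ℕ → List (Fin 4) → V → ℝ)
    (v : ℕ → V) (pix : ℕ → List (Fin 4)) (g : List (Fin 4) → ℝ) : ℕ → List (Fin 4) → ℝ
  | 0 => g
  | t + 1 => Gnext dmax qt v pix (GT dmax qt v pix g t) t


lemma inits_eq_map_take {α : Type*} (l : List α) :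
    l.inits = (List.range (l.length + 1)).map (fun i => l.take i) := by
  induction l with
  | nil => simp
  | cons a l ih =>
    simp [List.inits_cons, ih, List.range_succ_eq_map, List.map_map, Function.comp]

lemma prodrepr {α : Type*} [CommMonoid α] (f : List (Fin 4) → α) (l : List (Fin 4)) (d : ℕ)
    (hd : d ≤ l.length) :
    ((l.take d).inits.dropLast.map f).prod
      = ((List.range d).map (fun j => f (l.take j))).prod := by
  rw [inits_eq_map_take, List.length_take, min_eq_left hd, ← List.map_dropLast,
    List.range_succ, List.dropLast_concat, List.map_map]
  congr 1
  refine List.map_congr_left fun j hj => ?_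
  simp only [Function.comp]
  rw [List.take_take, min_eq_left (le_of_lt (List.mem_range.mp hj))]

lemma Qd_pos {V : Type} (dmax : ℕ) (qt : ℕ → List (Fin 4) → V → ℝ)
    (hqt : ∀ t s x, 0 < qt t s x) (v : ℕ → V) (pix : ℕ → List (Fin 4))
    (hpix : ∀ i, (pix i).length = dmax) (G : List (Fin 4) → ℝ)
    (hG : ∀ s : List (Fin 4), s.length ≤ dmax → 0 ≤ G s ∧ G s ≤ 1) (t : ℕ) :
    ∀ j, 0 < Qd dmax qt v pix G t j := by
  intro j
  induction j with
  | zero => exact hqt _ _ _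
  | succ j ih =>
    obtain ⟨h0, h1⟩ := hG ((pix t).take (dmax - (j + 1)))
      (by simp [List.length_take])
    have hq := hqt t ((pix t).take (dmax - (j + 1))) (v t)
    rcases eq_or_lt_of_le h1 with h | h
    · simpa [Qd, h] using ih
    · have h2 := mul_nonneg h0 ih.le
      simp only [Qd]
      nlinarith

lemma Qd_take {V : Type} (dmax : ℕ) (qt : ℕ → List (Fin 4) → V → ℝ) (v : ℕ → V)
    (pix : ℕ → List (Fin 4)) (G : List (Fin 4) → ℝ) (t d : ℕ) (hd : d < dmax) :
    Qd dmax qt v pix G t (dmax - d)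
      = (1 - G ((pix t).take d)) * qt t ((pix t).take d) (v t)
        + G ((pix t).take d) * Qd dmax qt v pix G t (dmax - d - 1) := by
  obtain ⟨j, hj⟩ : ∃ j, dmax - d = j + 1 := ⟨dmax - d - 1, by omega⟩
  rw [show dmax - d - 1 = j from by omega, hj, Qd, show dmax - (j + 1) = d from by omega]

lemma GT_zero {V : Type} (dmax : ℕ) (qt : ℕ → List (Fin 4) → V → ℝ) (v : ℕ → V)
    (pix : ℕ → List (Fin 4)) (g : List (Fin 4) → ℝ)
    (hg1 : ∀ s : List (Fin 4), s.length = dmax → g s = 0) :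
    ∀ t (s : List (Fin 4)), s.length = dmax → GT dmax qt v pix g t s = 0 := by
  intro t
  induction t with
  | zero => exact hg1
  | succ t ih =>
    intro s hs
    show Gnext dmax qt v pix (GT dmax qt v pix g t) t s = 0
    rw [Gnext, if_neg (by rintro ⟨-, h⟩; omega)]
    exact ih s hs

lemma GT_mem {V : Type} (dmax : ℕ) (qt : ℕ → List (Fin 4) → V → ℝ)
    (hqt : ∀ t s x, 0 < qt t s x) (v : ℕ → V) (pix : ℕ → List (Fin 4))
    (hpix : ∀ i, (pix i).length = dmax) (g : List (Fin 4) → ℝ)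
    (hg : ∀ s : List (Fin 4), s.length ≤ dmax → g s ∈ Set.Icc (0 : ℝ) 1) :
    ∀ t (s : List (Fin 4)), s.length ≤ dmax →
      0 ≤ GT dmax qt v pix g t s ∧ GT dmax qt v pix g t s ≤ 1 := by
  intro t
  induction t with
  | zero => exact fun s hs => ⟨(hg s hs).1, (hg s hs).2⟩
  | succ t ih =>
    intro s hs
    show 0 ≤ Gnext dmax qt v pix (GT dmax qt v pix g t) t s ∧
      Gnext dmax qt v pix (GT dmax qt v pix g t) t s ≤ 1
    rw [Gnext]
    split_ifs with h
    · obtain ⟨hpre, hlen⟩ := h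
      have hst : s = (pix t).take s.length := List.prefix_iff_eq_take.mp hpre
      have hQ1 : 0 < Qd dmax qt v pix (GT dmax qt v pix g t) t (dmax - s.length) :=
        Qd_pos dmax qt hqt v pix hpix _ ih t _
      have hQ2 : 0 < Qd dmax qt v pix (GT dmax qt v pix g t) t (dmax - s.length - 1) :=
        Qd_pos dmax qt hqt v pix hpix _ ih t _
      have key := Qd_take dmax qt v pix (GT dmax qt v pix g t) t s.length hlen
      rw [← hst] at key
      obtain ⟨h0, h1⟩ := ih s hs
      constructor
      · exact div_nonneg (mul_nonneg h0 hQ2.le) hQ1.le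
      · rw [div_le_one hQ1, key]
        have := mul_nonneg (sub_nonneg.2 h1) (hqt t s (v t)).le
        linarith
    · exact ih s hs

lemma tele {V : Type} (dmax : ℕ) (qt : ℕ → List (Fin 4) → V → ℝ)
    (hqt : ∀ t s x, 0 < qt t s x) (v : ℕ → V) (pix : ℕ → List (Fin 4))
    (hpix : ∀ i, (pix i).length = dmax) (G : List (Fin 4) → ℝ)
    (hG : ∀ s : List (Fin 4), s.length ≤ dmax → 0 ≤ G s ∧ G s ≤ 1) (k : ℕ) :
    ∀ d, d ≤ dmax →
      ((List.range d).map (fun j => Gnext dmax qt v pix G k ((pix k).take j))).prod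
        = Qd dmax qt v pix G k (dmax - d) / Qd dmax qt v pix G k dmax
          * ((List.range d).map (fun j => G ((pix k).take j))).prod := by
  intro d
  induction d with
  | zero =>
    intro _
    simp [div_self (Qd_pos dmax qt hqt v pix hpix G hG k dmax).ne']
  | succ d ih =>
    intro hd
    rw [List.range_succ, List.map_append, List.prod_append, ih (by omega),
      List.map_append, List.prod_append]
    simp only [List.map_cons, List.map_nil, List.prod_cons, List.prod_nil]
    have hlen : ((pix k).take d).length = d := by
      simp only [List.length_take, hpix]; omega
    rw [Gnext, if_pos ⟨List.take_prefix _ _, by rw [hlen]; omega⟩, hlen]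
    have h1 := Qd_pos dmax qt hqt v pix hpix G hG k (dmax - d)
    have h2 := Qd_pos dmax qt hqt v pix hpix G hG k dmax
    rw [show dmax - d - 1 = dmax - (d + 1) from by omega]
    field_simp

/-- Blocks are encoded by their quadrant paths; the blocks on the path `S_k`
of blocks containing pixel `k` are the prefixes `r = (pix k).take d`, `d ≤ dmax`, of the
pixel path `pix k`, and the proper ancestors `A_r` of `r` are its proper prefixes
`r.inits.dropLast`.  With `g_{·|k} = GT ... g (k+1)`, `g_{·|k-1} = GT ... g k`,
`q̃(v_k | v^{k-1}, r) = qt k r (v k)` and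
`q(v_k | v^{k-1}, s_λ) = Qd dmax qt v pix (GT ... g k) k dmax`, the one-step update
satisfies
`(1 - g_{r|k}) ∏_{s ∈ A_r} g_{s|k}
  = (q̃(v_k | v^{k-1}, r) / q(v_k | v^{k-1}, s_λ)) (1 - g_{r|k-1}) ∏_{s ∈ A_r} g_{s|k-1}`,
both when `|r| = 1` (i.e. `d = dmax`) and when `|r| > 1` (i.e. `d < dmax`). -/
theorem stmt10 (dmax : ℕ) (V : Type) [Fintype V]
    (g : List (Fin 4) → ℝ)
    (hg : ∀ s : List (Fin 4), s.length ≤ dmax → g s ∈ Set.Icc (0 : ℝ) 1)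
    (hg1 : ∀ s : List (Fin 4), s.length = dmax → g s = 0)
    (qt : ℕ → List (Fin 4) → V → ℝ)
    (hqt : ∀ t s x, 0 < qt t s x)
    (hqts : ∀ t s, ∑ x : V, qt t s x = 1)
    (v : ℕ → V) (pix : ℕ → List (Fin 4))
    (hpix : ∀ i, (pix i).length = dmax)
    (hinj : ∀ i j, i < 4 ^ dmax → j < 4 ^ dmax → pix i = pix j → i = j)
    (k : ℕ) (hk : k < 4 ^ dmax) (d : ℕ) (hd : d ≤ dmax) :
    (1 - GT dmax qt v pix g (k + 1) ((pix k).take d))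
        * (((pix k).take d).inits.dropLast.map (GT dmax qt v pix g (k + 1))).prod
      = (qt k ((pix k).take d) (v k) / Qd dmax qt v pix (GT dmax qt v pix g k) k dmax)
          * ((1 - GT dmax qt v pix g k ((pix k).take d))
            * (((pix k).take d).inits.dropLast.map (GT dmax qt v pix g k)).prod) := by
  have hGmem := GT_mem dmax qt hqt v pix hpix g hg k
  have hdl : d ≤ (pix k).length := by rw [hpix k]; exact hd
  have hG1 : GT dmax qt v pix g (k + 1) = Gnext dmax qt v pix (GT dmax qt v pix g k) k := rfl
  rw [hG1, prodrepr (Gnext dmax qt v pix (GT dmax qt v pix g k) k) (pix k) d hdl,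
    prodrepr (GT dmax qt v pix g k) (pix k) d hdl,
    tele dmax qt hqt v pix hpix _ hGmem k d hd]
  have hQm := Qd_pos dmax qt hqt v pix hpix _ hGmem k dmax
  rcases eq_or_lt_of_le hd with heq | hdlt
  · have hlen : ((pix k).take d).length = dmax := by
      simp [List.length_take, hpix, heq]
    have hz1 : Gnext dmax qt v pix (GT dmax qt v pix g k) k ((pix k).take d) = 0 :=
      GT_zero dmax qt v pix g hg1 (k + 1) ((pix k).take d) hlen
    have hz0 : GT dmax qt v pix g k ((pix k).take d) = 0 :=
      GT_zero dmax qt v pix g hg1 k _ hlen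
    rw [hz1, hz0, heq, Nat.sub_self,
      show Qd dmax qt v pix (GT dmax qt v pix g k) k 0
        = qt k ((pix k).take dmax) (v k) from rfl]
    ring
  · have hlen : ((pix k).take d).length = d := by
      simp only [List.length_take, hpix]; omega
    rw [Gnext, if_pos ⟨List.take_prefix _ _, by rw [hlen]; omega⟩, hlen]
    have key := Qd_take dmax qt v pix (GT dmax qt v pix g k) k d hdlt
    have hQB := Qd_pos dmax qt hqt v pix hpix _ hGmem k (dmax - d)
    have hne : (1 - GT dmax qt v pix g k ((pix k).take d)) * qt k ((pix k).take d) (v k)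
        + GT dmax qt v pix g k ((pix k).take d)
          * Qd dmax qt v pix (GT dmax qt v pix g k) k (dmax - d - 1) ≠ 0 := by
      rw [← key]; exact hQB.ne'
    rw [key]
    field_simp
    ring
end

section
/- In the setting of the quadtree mixture algorithm, for every t ≥ 0 and every block s of the complete quadtree of depth d_max, the marginal posterior probability that s is a leaf of the true model satisfies ∑_{m ∈ M : s ∈ L^m} p(m | v^t) = (1 − g_{s|t}) · ∏_{s' ∈ A_s} g_{s'|t}, where A_s is the set of proper ancestor blocks of s and g_{s|t} are the sequentially updated hyperparameters of the algorithm. -/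
namespace Stmt11Aux
open FullTree

lemma mem_leaves_prefix {k : ℕ} : ∀ {D : ℕ} (u : List (Fin k)) (T : FullTree k D)
    (x : List (Fin k)), x ∈ leaves u T → u <+: x
  | _, u, .leaf, x, hx => by
      simp [leaves] at hx; simp [hx]
  | _, u, .node c, x, hx => by
      simp only [leaves, Finset.mem_biUnion, Finset.mem_univ, true_and] at hx
      obtain ⟨i, hi⟩ := hx
      exact (List.prefix_append u [i]).trans (mem_leaves_prefix (u ++ [i]) (c i) x hi)

lemma mem_inners_prefix {k : ℕ} : ∀ {D : ℕ} (u : List (Fin k)) (T : FullTree k D)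
    (x : List (Fin k)), x ∈ inners u T → u <+: x
  | _, _, .leaf, x, hx => by simp [inners] at hx
  | _, u, .node c, x, hx => by
      simp only [inners, Finset.mem_insert, Finset.mem_biUnion, Finset.mem_univ,
        true_and] at hx
      rcases hx with rfl | ⟨i, hi⟩
      · exact List.prefix_rfl
      · exact (List.prefix_append u [i]).trans (mem_inners_prefix (u ++ [i]) (c i) x hi)

lemma child_inj {k : ℕ} {u x : List (Fin k)} {i j : Fin k}
    (hi : u ++ [i] <+: x) (hj : u ++ [j] <+: x) : i = j := by
  obtain ⟨r, hr⟩ := hi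
  obtain ⟨r', hr'⟩ := hj
  rw [← hr] at hr'
  rw [List.append_assoc, List.append_assoc] at hr'
  have := List.append_cancel_left hr'.symm
  simpa using congrArg (·.head?) this

lemma weight_leaf {k D : ℕ} (G : List (Fin k) → ℝ) (u : List (Fin k)) :
    weight G u (.leaf : FullTree k D) = 1 - G u := by
  simp [weight, leaves, inners]

lemma weight_node {k D : ℕ} (G : List (Fin k) → ℝ) (u : List (Fin k))
    (c : Fin k → FullTree k D) :
    weight G u (.node c) = G u * ∏ i, weight G (u ++ [i]) (c i) := by
  have hdisjL : (↑(Finset.univ : Finset (Fin k)) : Set (Fin k)).PairwiseDisjoint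
      (fun i => leaves (u ++ [i]) (c i)) := by
    intro i _ j _ hij
    refine Finset.disjoint_left.2 fun x hxi hxj => hij ?_
    exact child_inj (mem_leaves_prefix _ _ _ hxi) (mem_leaves_prefix _ _ _ hxj)
  have hdisjI : (↑(Finset.univ : Finset (Fin k)) : Set (Fin k)).PairwiseDisjoint
      (fun i => inners (u ++ [i]) (c i)) := by
    intro i _ j _ hij
    refine Finset.disjoint_left.2 fun x hxi hxj => hij ?_
    exact child_inj (mem_inners_prefix _ _ _ hxi) (mem_inners_prefix _ _ _ hxj)
  have hu : u ∉ Finset.univ.biUnion fun i => inners (u ++ [i]) (c i) := by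
    intro h
    simp only [Finset.mem_biUnion, Finset.mem_univ, true_and] at h
    obtain ⟨i, hi⟩ := h
    have := (mem_inners_prefix _ _ _ hi).length_le
    simp at this
  show (∏ s ∈ Finset.univ.biUnion fun i => leaves (u ++ [i]) (c i), (1 - G s)) *
      ∏ s ∈ insert u (Finset.univ.biUnion fun i => inners (u ++ [i]) (c i)), G s =
      G u * ∏ i, weight G (u ++ [i]) (c i)
  rw [Finset.prod_insert hu, Finset.prod_biUnion hdisjL, Finset.prod_biUnion hdisjI]
  simp only [weight]
  rw [Finset.prod_mul_distrib]
  ring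


lemma sum_tree_zero {k : ℕ} (f : FullTree k 0 → ℝ) : ∑ T : FullTree k 0, f T = f .leaf := by
  rw [← (equivZero k).symm.sum_comp f]
  simp [equivZero]

lemma sum_tree_succ {k D : ℕ} (f : FullTree k (D + 1) → ℝ) :
    ∑ T : FullTree k (D + 1), f T = f .leaf + ∑ c : Fin k → FullTree k D, f (.node c) := by
  rw [← (equivSucc k D).symm.sum_comp f, Fintype.sum_option]
  rfl

lemma sum_pi_prod {k D : ℕ} (F : Fin k → FullTree k D → ℝ) :
    ∑ c : Fin k → FullTree k D, ∏ i, F i (c i) = ∏ i, ∑ T : FullTree k D, F i T := by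
  rw [Finset.prod_univ_sum, Fintype.piFinset_univ]

lemma sum_weight_one {k : ℕ} : ∀ (D : ℕ) (u : List (Fin k)) (G : List (Fin k) → ℝ),
    (∀ x, u <+: x → x.length = u.length + D → G x = 0) →
    ∑ T : FullTree k D, weight G u T = 1
  | 0, u, G, H => by
      rw [sum_tree_zero, weight_leaf, H u List.prefix_rfl (by simp)]
      ring
  | D + 1, u, G, H => by
      rw [sum_tree_succ, weight_leaf]
      have h1 : ∑ c : Fin k → FullTree k D, weight G u (.node c) = G u := by
        calc ∑ c : Fin k → FullTree k D, weight G u (.node c)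
            = G u * ∑ c : Fin k → FullTree k D, ∏ i, weight G (u ++ [i]) (c i) := by
              rw [Finset.mul_sum]; exact Finset.sum_congr rfl fun c _ => weight_node G u c
          _ = G u * ∏ i : Fin k, ∑ T : FullTree k D, weight G (u ++ [i]) T := by
              rw [sum_pi_prod]
          _ = G u := by
              rw [Finset.prod_congr rfl fun i _ => sum_weight_one D (u ++ [i]) G ?_]
              · simp
              · intro x hx hlen
                refine H x ((List.prefix_append u [i]).trans hx) ?_
                simp at hlen ⊢; omega
      rw [h1]; ring
def prodAnc {k : ℕ} (G : List (Fin k) → ℝ) : List (Fin k) → List (Fin k) → ℝ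
  | _, [] => 1
  | u, i :: w => G u * prodAnc G (u ++ [i]) w

lemma not_mem_leaves_self_node {k D : ℕ} (u : List (Fin k)) (c : Fin k → FullTree k D) :
    u ∉ leaves u (.node c) := by
  intro h
  simp only [leaves, Finset.mem_biUnion, Finset.mem_univ, true_and] at h
  obtain ⟨i, hi⟩ := h
  have := (mem_leaves_prefix _ _ _ hi).length_le
  simp at this

lemma sum_weight_leaves {k : ℕ} : ∀ (w : List (Fin k)) (D : ℕ) (u : List (Fin k))
    (G : List (Fin k) → ℝ), w.length ≤ D →
    (∀ x, u <+: x → x.length = u.length + D → G x = 0) →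
    (∑ T : FullTree k D, if u ++ w ∈ leaves u T then weight G u T else 0)
      = (1 - G (u ++ w)) * prodAnc G u w
  | [], 0, u, G, _, H => by
      rw [sum_tree_zero]
      simp [leaves, prodAnc, weight_leaf]
  | [], D + 1, u, G, _, H => by
      rw [sum_tree_succ]
      have h2 : ∀ c : Fin k → FullTree k D,
          (if u ++ [] ∈ leaves u (.node c) then weight G u (.node c) else 0) = 0 := by
        intro c
        rw [if_neg]
        simpa using not_mem_leaves_self_node u c
      simp only [h2, Finset.sum_const_zero, add_zero]
      simp [leaves, prodAnc, weight_leaf]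
  | i :: w, D + 1, u, G, hlen, H => by
      rw [sum_tree_succ]
      have hleaf : (if u ++ i :: w ∈ leaves u (.leaf : FullTree k (D+1)) then
          weight G u (.leaf : FullTree k (D+1)) else 0) = 0 := by
        rw [if_neg]
        intro h
        simp only [leaves, Finset.mem_singleton] at h
        have := congrArg List.length h
        simp at this
      rw [hleaf, zero_add]
      -- membership in node leaves reduces to membership in child i's leaves
      have hmem : ∀ c : Fin k → FullTree k D,
          (u ++ i :: w ∈ leaves u (.node c)) ↔ u ++ i :: w ∈ leaves (u ++ [i]) (c i) := by
        intro c
        simp only [leaves, Finset.mem_biUnion, Finset.mem_univ, true_and]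
        constructor
        · rintro ⟨j, hj⟩
          have hpj := mem_leaves_prefix _ _ _ hj
          have hpi : u ++ [i] <+: u ++ i :: w := by
            simpa [List.append_assoc] using (List.prefix_append (u ++ [i]) w)
          have : j = i := child_inj hpj hpi
          rwa [this] at hj
        · intro h; exact ⟨i, h⟩
      have key : ∀ c : Fin k → FullTree k D,
          (if u ++ i :: w ∈ leaves u (.node c) then weight G u (.node c) else 0)
          = G u * ∏ j, (fun (j : Fin k) (T : FullTree k D) =>
              if j = i then (if u ++ i :: w ∈ leaves (u ++ [i]) T
                then weight G (u ++ [i]) T else 0)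
              else weight G (u ++ [j]) T) j (c j) := by
        intro c
        by_cases h : u ++ i :: w ∈ leaves (u ++ [i]) (c i)
        · rw [if_pos ((hmem c).2 h), weight_node]
          congr 1
          refine Finset.prod_congr rfl fun j _ => ?_
          by_cases hji : j = i
          · subst hji; simp [h]
          · simp [hji]
        · rw [if_neg (fun hh => h ((hmem c).1 hh))]
          rw [Finset.prod_eq_zero (Finset.mem_univ i) (by simp [h])]
          ring
      rw [Finset.sum_congr rfl fun c _ => key c, ← Finset.mul_sum,
        sum_pi_prod (fun (j : Fin k) (T : FullTree k D) =>
          if j = i then (if u ++ i :: w ∈ leaves (u ++ [i]) T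
            then weight G (u ++ [i]) T else 0)
          else weight G (u ++ [j]) T)]
      have Hc : ∀ (j : Fin k) x, u ++ [j] <+: x → x.length = (u ++ [j]).length + D →
          G x = 0 := by
        intro j x hx hlenx
        refine H x ((List.prefix_append u [j]).trans hx) ?_
        simp at hlenx ⊢; omega
      have hfac : ∀ j : Fin k, (∑ T : FullTree k D, (fun (j : Fin k) (T : FullTree k D) =>
              if j = i then (if u ++ i :: w ∈ leaves (u ++ [i]) T
                then weight G (u ++ [i]) T else 0)
              else weight G (u ++ [j]) T) j T)
          = if j = i then (1 - G (u ++ i :: w)) * prodAnc G (u ++ [i]) w else 1 := by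
        intro j
        by_cases hji : j = i
        · subst hji
          simp only [if_pos rfl]
          have := sum_weight_leaves w D (u ++ [j]) G (by simp at hlen; omega) (Hc j)
          simpa [List.append_assoc] using this
        · simp only [if_neg hji]
          exact sum_weight_one D (u ++ [j]) G (Hc j)
      rw [Finset.prod_congr rfl fun j _ => hfac j, Finset.prod_ite_eq' Finset.univ i
        (fun _ => (1 - G (u ++ i :: w)) * prodAnc G (u ++ [i]) w)]
      simp only [Finset.mem_univ, if_pos]
      show G u * ((1 - G (u ++ i :: w)) * prodAnc G (u ++ [i]) w)
        = (1 - G (u ++ i :: w)) * prodAnc G u (i :: w)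
      rw [prodAnc]
      ring

lemma prodAnc_eq {k : ℕ} (G : List (Fin k) → ℝ) :
    ∀ (s u : List (Fin k)), prodAnc G u s = ((s.inits.dropLast.map (u ++ ·)).map G).prod
  | [], u => by simp [prodAnc]
  | i :: s, u => by
      rw [prodAnc, prodAnc_eq G s (u ++ [i])]
      have h1 : (i :: s).inits = [] :: s.inits.map (i :: ·) := by
        simp [List.inits]
      rw [h1]
      have h2 : ((s.inits.map (i :: ·)) : List (List (Fin k))) ≠ [] := by
        intro h
        have := congrArg List.length h
        simp [List.length_inits] at this
      rw [List.dropLast_cons_of_ne_nil h2]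
      simp only [List.map_cons, List.map_dropLast, List.map_map, List.prod_cons]
      congr 2
      · simp
      · congr 1
        ext w
        simp [Function.comp, List.append_assoc]

lemma weight_congr {k : ℕ} : ∀ {D : ℕ} (u : List (Fin k)) (T : FullTree k D)
    (G G' : List (Fin k) → ℝ), (∀ x, u <+: x → G' x = G x) →
    weight G' u T = weight G u T := by
  intro D u T G G' h
  unfold weight
  congr 1
  · exact Finset.prod_congr rfl fun x hx => by rw [h x (mem_leaves_prefix u T x hx)]
  · exact Finset.prod_congr rfl fun x hx => by rw [h x (mem_inners_prefix u T x hx)]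

lemma Qd_pos {V : Type} (dmax : ℕ) (qt : ℕ → List (Fin 4) → V → ℝ)
    (hqt : ∀ t s x, 0 < qt t s x) (v : ℕ → V) (pix : ℕ → List (Fin 4))
    (G : List (Fin 4) → ℝ) (t : ℕ)
    (hG : ∀ x : List (Fin 4), x.length ≤ dmax → G x ∈ Set.Icc (0:ℝ) 1)
    (hpix : (pix t).length = dmax) :
    ∀ j, 0 < Qd dmax qt v pix G t j
  | 0 => by rw [Qd]; exact hqt _ _ _
  | j + 1 => by
      rw [Qd]
      have hlen : ((pix t).take (dmax - (j + 1))).length ≤ dmax := by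
        simp [hpix]
      obtain ⟨h0, h1⟩ := hG _ hlen
      have hq := hqt t ((pix t).take (dmax - (j + 1))) (v t)
      have hQ := Qd_pos dmax qt hqt v pix G t hG hpix j
      rcases eq_or_lt_of_le h1 with h | h
      · rw [h]; simpa using hQ
      · have := mul_pos (by linarith : (0:ℝ) < 1 - G ((pix t).take (dmax - (j+1)))) hq
        nlinarith

lemma step_eq {V : Type} (dmax : ℕ) (qt : ℕ → List (Fin 4) → V → ℝ)
    (hqt : ∀ t s x, 0 < qt t s x) (v : ℕ → V) (pix : ℕ → List (Fin 4)) (t : ℕ)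
    (hpix : (pix t).length = dmax) (G : List (Fin 4) → ℝ)
    (hG : ∀ x : List (Fin 4), x.length ≤ dmax → G x ∈ Set.Icc (0:ℝ) 1) :
    ∀ {D : ℕ} (m : FullTree 4 D) (u : List (Fin 4)), u.length + D = dmax →
      u <+: pix t →
      weight G u m * qt t (leafOf u m ((pix t).drop u.length)) (v t)
        = Qd dmax qt v pix G t D * weight (Gnext dmax qt v pix G t) u m
  | D, .leaf, u, hlen, hpre => by
      have hleafOf : leafOf u (.leaf : FullTree 4 D) ((pix t).drop u.length) = u := by
        rw [leafOf]
      rw [hleafOf, weight_leaf, weight_leaf]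
      rcases Nat.eq_zero_or_pos D with hD | hD
      · subst hD
        have hu : u = pix t := hpre.eq_of_length (by omega)
        have hGn : Gnext dmax qt v pix G t u = G u := by
          rw [Gnext, if_neg]; rintro ⟨-, h⟩; omega
        rw [hGn, Qd, List.take_of_length_le (le_of_eq hpix), hu]
        ring
      · obtain ⟨D', rfl⟩ : ∃ D', D = D' + 1 := ⟨D - 1, by omega⟩
        have hulen : u.length < dmax := by omega
        have htake : (pix t).take u.length = u := (List.prefix_iff_eq_take.1 hpre).symm
        have hQrec : Qd dmax qt v pix G t (D' + 1)
            = (1 - G u) * qt t u (v t) + G u * Qd dmax qt v pix G t D' := by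
          rw [Qd]
          have : dmax - (D' + 1) = u.length := by omega
          rw [this, htake]
        have hQpos : 0 < Qd dmax qt v pix G t (D' + 1) :=
          Qd_pos dmax qt hqt v pix G t hG hpix _
        have hGn : Gnext dmax qt v pix G t u
            = G u * Qd dmax qt v pix G t D' / Qd dmax qt v pix G t (D' + 1) := by
          rw [Gnext, if_pos ⟨hpre, hulen⟩]
          have h1 : dmax - u.length - 1 = D' := by omega
          have h2 : dmax - u.length = D' + 1 := by omega
          rw [h1, h2]
        rw [hGn]
        field_simp
        linarith [hQrec]
  | D' + 1, .node c, u, hlen, hpre => by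
      have hulen : u.length < dmax := by omega
      obtain ⟨r0, hr0⟩ := hpre
      match r0, hr0 with
      | [], hr0 => exact absurd (congrArg List.length hr0) (by simp; omega)
      | i0 :: r, hr0 =>
      have hdrop : (pix t).drop u.length = i0 :: r := by
        rw [← hr0, List.drop_left]
      have hpre0 : u ++ [i0] <+: pix t := ⟨r, by rw [← hr0]; simp⟩
      have hdrop2 : (pix t).drop (u ++ [i0]).length = r := by
        have h1 : (pix t).drop (u.length + 1) = r := by
          have h2 := congrArg (List.drop 1) hdrop
          rw [List.drop_drop] at h2
          simpa [Nat.add_comm] using h2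
        simpa using h1
      have hleafOf : leafOf u (.node c) ((pix t).drop u.length)
          = leafOf (u ++ [i0]) (c i0) ((pix t).drop (u ++ [i0]).length) := by
        rw [hdrop, hdrop2]; rfl
      have IH := step_eq dmax qt hqt v pix t hpix G hG (c i0) (u ++ [i0])
        (by simp only [List.length_append, List.length_singleton]; omega) hpre0
      have hoff : ∀ j : Fin 4, j ≠ i0 →
          weight (Gnext dmax qt v pix G t) (u ++ [j]) (c j)
            = weight G (u ++ [j]) (c j) := by
        intro j hj
        refine weight_congr _ _ _ _ fun x hx => ?_
        rw [Gnext, if_neg]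
        rintro ⟨hxp, -⟩
        exact hj (child_inj (hx.trans hxp) hpre0)
      have hQpos : 0 < Qd dmax qt v pix G t (D' + 1) :=
        Qd_pos dmax qt hqt v pix G t hG hpix _
      have hGn : Qd dmax qt v pix G t (D' + 1) * Gnext dmax qt v pix G t u
          = G u * Qd dmax qt v pix G t D' := by
        rw [Gnext, if_pos ⟨⟨i0 :: r, hr0⟩, hulen⟩]
        have h1 : dmax - u.length - 1 = D' := by omega
        have h2 : dmax - u.length = D' + 1 := by omega
        rw [h1, h2]
        field_simp
      rw [hleafOf, weight_node, weight_node]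
      rw [Fintype.prod_eq_mul_prod_compl i0 (fun j => weight G (u ++ [j]) (c j)),
        Fintype.prod_eq_mul_prod_compl i0
          (fun j => weight (Gnext dmax qt v pix G t) (u ++ [j]) (c j))]
      have hoffprod : ∏ j ∈ {i0}ᶜ, weight (Gnext dmax qt v pix G t) (u ++ [j]) (c j)
          = ∏ j ∈ {i0}ᶜ, weight G (u ++ [j]) (c j) := by
        refine Finset.prod_congr rfl fun j hj => hoff j ?_
        simpa using hj
      rw [hoffprod]
      have : G u * (weight G (u ++ [i0]) (c i0) * ∏ j ∈ {i0}ᶜ, weight G (u ++ [j]) (c j))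
            * qt t (leafOf (u ++ [i0]) (c i0) ((pix t).drop (u ++ [i0]).length)) (v t)
          = G u * (weight G (u ++ [i0]) (c i0)
              * qt t (leafOf (u ++ [i0]) (c i0) ((pix t).drop (u ++ [i0]).length)) (v t))
            * ∏ j ∈ {i0}ᶜ, weight G (u ++ [j]) (c j) := by ring
      rw [this, IH]
      have : Qd dmax qt v pix G t (D' + 1) * (Gnext dmax qt v pix G t u
            * (weight (Gnext dmax qt v pix G t) (u ++ [i0]) (c i0)
              * ∏ j ∈ {i0}ᶜ, weight G (u ++ [j]) (c j)))
          = (Qd dmax qt v pix G t (D' + 1) * Gnext dmax qt v pix G t u)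
            * weight (Gnext dmax qt v pix G t) (u ++ [i0]) (c i0)
            * ∏ j ∈ {i0}ᶜ, weight G (u ++ [j]) (c j) := by ring
      rw [this, hGn]
      ring

lemma GT_inv {V : Type} (dmax : ℕ) (qt : ℕ → List (Fin 4) → V → ℝ)
    (hqt : ∀ t s x, 0 < qt t s x) (v : ℕ → V) (pix : ℕ → List (Fin 4))
    (hpix : ∀ i, (pix i).length = dmax) (g : List (Fin 4) → ℝ)
    (hg : ∀ s : List (Fin 4), s.length ≤ dmax → g s ∈ Set.Icc (0:ℝ) 1)
    (hg1 : ∀ s : List (Fin 4), s.length = dmax → g s = 0) :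
    ∀ τ, (∀ x : List (Fin 4), x.length ≤ dmax →
            GT dmax qt v pix g τ x ∈ Set.Icc (0:ℝ) 1) ∧
         (∀ x : List (Fin 4), x.length = dmax → GT dmax qt v pix g τ x = 0)
  | 0 => ⟨hg, hg1⟩
  | τ + 1 => by
      obtain ⟨ih1, ih2⟩ := GT_inv dmax qt hqt v pix hpix g hg hg1 τ
      set G := GT dmax qt v pix g τ with hGdef
      have hstep : GT dmax qt v pix g (τ + 1) = Gnext dmax qt v pix G τ := rfl
      constructor
      · intro x hx
        rw [hstep, Gnext]
        split_ifs with h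
        · obtain ⟨hxp, hxl⟩ := h
          have hQ1 := Qd_pos dmax qt hqt v pix G τ ih1 (hpix τ) (dmax - x.length - 1)
          have hQ2 := Qd_pos dmax qt hqt v pix G τ ih1 (hpix τ) (dmax - x.length)
          constructor
          · exact div_nonneg (mul_nonneg (ih1 x hx).1 hQ1.le) hQ2.le
          · rw [div_le_one hQ2]
            have he : dmax - x.length = (dmax - x.length - 1) + 1 := by omega
            have htake : (pix τ).take (dmax - (dmax - x.length - 1 + 1)) = x := by
              have : dmax - (dmax - x.length - 1 + 1) = x.length := by omega
              rw [this, ← List.prefix_iff_eq_take.1 hxp]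
            calc G x * Qd dmax qt v pix G τ (dmax - x.length - 1)
                ≤ (1 - G x) * qt τ x (v τ)
                    + G x * Qd dmax qt v pix G τ (dmax - x.length - 1) := by
                  have h1 : 0 ≤ 1 - G x := by linarith [(ih1 x hx).2]
                  nlinarith [hqt τ x (v τ)]
              _ = Qd dmax qt v pix G τ (dmax - x.length) := by
                  rw [he, Qd, htake]
                  simp only [Nat.add_sub_cancel]
        · exact ih1 x hx
      · intro x hx
        rw [hstep, Gnext, if_neg]
        · exact ih2 x hx
        · rintro ⟨-, h⟩; omega

lemma main_prod {V : Type} (dmax : ℕ) (qt : ℕ → List (Fin 4) → V → ℝ)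
    (hqt : ∀ t s x, 0 < qt t s x) (v : ℕ → V) (pix : ℕ → List (Fin 4))
    (hpix : ∀ i, (pix i).length = dmax) (g : List (Fin 4) → ℝ)
    (hg : ∀ s : List (Fin 4), s.length ≤ dmax → g s ∈ Set.Icc (0:ℝ) 1)
    (hg1 : ∀ s : List (Fin 4), s.length = dmax → g s = 0) :
    ∀ (τ : ℕ) (m : FullTree 4 dmax),
      weight g [] m * like dmax qt v pix m τ
        = (∏ i ∈ Finset.range τ, Qd dmax qt v pix (GT dmax qt v pix g i) i dmax)
          * weight (GT dmax qt v pix g τ) [] m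
  | 0, m => by simp [like, GT]
  | τ + 1, m => by
      have hlike : like dmax qt v pix m (τ + 1)
          = like dmax qt v pix m τ * qt τ (leafOf [] m (pix τ)) (v τ) := by
        rw [like, like, Finset.prod_range_succ]
      have ih := main_prod dmax qt hqt v pix hpix g hg hg1 τ m
      have hstep := step_eq dmax qt hqt v pix τ (hpix τ)
        (GT dmax qt v pix g τ)
        (GT_inv dmax qt hqt v pix hpix g hg hg1 τ).1
        m [] (by simp) List.nil_prefix
      rw [List.length_nil, List.drop_zero] at hstep
      have hGT : GT dmax qt v pix g (τ + 1)
          = Gnext dmax qt v pix (GT dmax qt v pix g τ) τ := rfl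
      rw [hlike, ← mul_assoc, ih, Finset.prod_range_succ, mul_assoc, hstep, hGT]
      ring

end Stmt11Aux
/-- Blocks are encoded by their quadrant paths `List (Fin 4)` of length
`≤ dmax`; the proper ancestors `A_s` of a block `s` are its proper prefixes
`s.inits.dropLast`.  With model prior `p(m) = weight g [] m`, likelihood
`p(v^t | m) = like dmax qt v pix m (t+1)`, posterior `p(m | v^t) ∝ p(m) p(v^t | m)`, and
sequentially updated weights `g_{s|t} = GT dmax qt v pix g (t+1) s`, the marginal posterior
probability that `s` is a leaf of the true model satisfies
`∑_{m : s ∈ L^m} p(m | v^t) = (1 - g_{s|t}) ∏_{s' ∈ A_s} g_{s'|t}`. -/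
theorem stmt11 (dmax : ℕ) (V : Type) [Fintype V]
    (g : List (Fin 4) → ℝ)
    (hg : ∀ s : List (Fin 4), s.length ≤ dmax → g s ∈ Set.Icc (0 : ℝ) 1)
    (hg1 : ∀ s : List (Fin 4), s.length = dmax → g s = 0)
    (qt : ℕ → List (Fin 4) → V → ℝ)
    (hqt : ∀ t s x, 0 < qt t s x)
    (hqts : ∀ t s, ∑ x : V, qt t s x = 1)
    (v : ℕ → V) (pix : ℕ → List (Fin 4))
    (hpix : ∀ i, (pix i).length = dmax)
    (hinj : ∀ i j, i < 4 ^ dmax → j < 4 ^ dmax → pix i = pix j → i = j)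
    (t : ℕ) (ht : t < 4 ^ dmax)
    (s : List (Fin 4)) (hs : s.length ≤ dmax) :
    (∑ m ∈ Finset.univ.filter (fun m : FullTree 4 dmax =>
          s ∈ FullTree.leaves ([] : List (Fin 4)) m),
        FullTree.weight g [] m * like dmax qt v pix m (t + 1)
          / ∑ m' : FullTree 4 dmax, FullTree.weight g [] m' * like dmax qt v pix m' (t + 1))
      = (1 - GT dmax qt v pix g (t + 1) s)
          * (s.inits.dropLast.map (GT dmax qt v pix g (t + 1))).prod := by

  classical
  set G' := GT dmax qt v pix g (t + 1) with hG'def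
  obtain ⟨hI1, hI2⟩ := Stmt11Aux.GT_inv dmax qt hqt v pix hpix g hg hg1 (t + 1)
  set Z := ∏ i ∈ Finset.range (t + 1), Qd dmax qt v pix (GT dmax qt v pix g i) i dmax
    with hZdef
  have hZpos : 0 < Z := by
    refine Finset.prod_pos fun i _ => ?_
    exact Stmt11Aux.Qd_pos dmax qt hqt v pix _ i
      (Stmt11Aux.GT_inv dmax qt hqt v pix hpix g hg hg1 i).1 (hpix i) dmax
  have hH : ∀ x : List (Fin 4), ([] : List (Fin 4)) <+: x →
      x.length = ([] : List (Fin 4)).length + dmax → G' x = 0 := by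
    intro x _ hx
    exact hI2 x (by simpa using hx)
  have hden : (∑ m' : FullTree 4 dmax, FullTree.weight g [] m' * like dmax qt v pix m' (t + 1))
      = Z := by
    rw [Finset.sum_congr rfl fun m' _ =>
      Stmt11Aux.main_prod dmax qt hqt v pix hpix g hg hg1 (t + 1) m']
    rw [← Finset.mul_sum, Stmt11Aux.sum_weight_one dmax [] G' hH, mul_one]
  have hnum : (∑ m ∈ Finset.univ.filter (fun m : FullTree 4 dmax =>
        s ∈ FullTree.leaves ([] : List (Fin 4)) m),
      FullTree.weight g [] m * like dmax qt v pix m (t + 1))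
      = Z * ((1 - G' s) * Stmt11Aux.prodAnc G' [] s) := by
    rw [Finset.sum_filter]
    have hterm : ∀ m : FullTree 4 dmax,
        (if s ∈ FullTree.leaves ([] : List (Fin 4)) m then
            FullTree.weight g [] m * like dmax qt v pix m (t + 1) else 0)
        = Z * (if s ∈ FullTree.leaves ([] : List (Fin 4)) m then
            FullTree.weight G' [] m else 0) := by
      intro m
      split_ifs with h
      · exact Stmt11Aux.main_prod dmax qt hqt v pix hpix g hg hg1 (t + 1) m
      · simp
    rw [Finset.sum_congr rfl fun m _ => hterm m, ← Finset.mul_sum]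
    congr 1
    have := Stmt11Aux.sum_weight_leaves s dmax ([] : List (Fin 4)) G' (by simpa using hs) hH
    simpa using this
  rw [← Finset.sum_div, hnum, hden, mul_comm Z _, mul_div_assoc, div_self hZpos.ne', mul_one]
  congr 1
  rw [Stmt11Aux.prodAnc_eq G' s []]
  simp
end
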